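/- Any facet of a proper polyhedral cone is a retract of it: if F is a facet of a proper polyhedral cone C ⊆ V, then there exist a linear map Φ : V → span(F) with Φ(C) ⊆ F and the inclusion Ψ : span(F) → V, such that Φ ∘ Ψ = id on span(F). -/

import Mathlib

open scoped TensorProduct
open TensorProduct

section Defs

variable {V V' V1 V2 : Type*}
  [AddCommGroup V] [Module ℝ V] [AddCommGroup V'] [Module ℝ V']
  [AddCommGroup V1] [Module ℝ V1] [AddCommGroup V2] [Module ℝ V2]

/-- The dual cone of a set `C`: linear functionals nonnegative on `C`. -/
def dualCone (C : Set V) : Set (Module.Dual ℝ V) := {f | ∀ x ∈ C, 0 ≤ f x}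

/-- The functional `f ⊗ g` on `V1 ⊗ V2`. -/
noncomputable def pairTensor (f : Module.Dual ℝ V1) (g : Module.Dual ℝ V2) :
    Module.Dual ℝ (V1 ⊗[ℝ] V2) :=
  (TensorProduct.lid ℝ ℝ).toLinearMap ∘ₗ TensorProduct.map f g

/-- The minimal tensor product of two cones: the convex hull of the product tensors. -/
def minTensor (C1 : Set V1) (C2 : Set V2) : Set (V1 ⊗[ℝ] V2) :=
  convexHull ℝ {z | ∃ x ∈ C1, ∃ y ∈ C2, z = x ⊗ₜ[ℝ] y}

/-- The maximal tensor product of two cones: tensors nonnegative on product functionals. -/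
def maxTensor (C1 : Set V1) (C2 : Set V2) : Set (V1 ⊗[ℝ] V2) :=
  {z | ∀ f ∈ dualCone C1, ∀ g ∈ dualCone C2, 0 ≤ pairTensor f g z}

/-- A cone: a set closed under multiplication by nonnegative scalars. -/
def IsConeSet (C : Set V) : Prop := ∀ x ∈ C, ∀ a : ℝ, 0 ≤ a → a • x ∈ C

/-- Topological closedness of a subset of a finite-dimensional real vector space,
expressed through (all) linear identifications with `Fin n → ℝ`. -/
def IsClosedSet (C : Set V) : Prop := ∀ (n : ℕ) (e : V ≃ₗ[ℝ] (Fin n → ℝ)), IsClosed (e '' C)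

/-- A proper cone: convex, closed, salient and generating. -/
def IsProperCone (C : Set V) : Prop :=
  Convex ℝ C ∧ IsClosedSet C ∧ IsConeSet C ∧ C ∩ (-C) = {0} ∧ Submodule.span ℝ C = ⊤

/-- A classical cone: the set of vectors with nonnegative coordinates in some basis,
i.e. the cone generated by a basis of the space. -/
def IsClassicalCone (C : Set V) : Prop :=
  ∃ (ι : Type) (b : Module.Basis ι ℝ V), C = {x | ∀ i, 0 ≤ b.repr x i}

/-- `C'` is a retract of `C` if there are positive maps `Φ, Ψ` with `Φ ∘ Ψ = id`. -/
def IsRetractOf (C' : Set V') (C : Set V) : Prop :=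
  ∃ (Φ : V →ₗ[ℝ] V') (Ψ : V' →ₗ[ℝ] V),
    (∀ x ∈ C, Φ x ∈ C') ∧ (∀ y ∈ C', Ψ y ∈ C) ∧ Φ ∘ₗ Ψ = LinearMap.id

/-- A polyhedral cone: the conical hull of finitely many vectors. -/
def IsPolyhedralCone (C : Set V) : Prop :=
  ∃ (k : ℕ) (v : Fin k → V),
    C = {x | ∃ c : Fin k → ℝ, (∀ i, 0 ≤ c i) ∧ x = ∑ i, c i • v i}

end Defs

/-- A face of a convex set: a nonempty convex subset such that whenever an interior
convex combination of two points of the set lies in it, both points lie in it. -/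
def IsFaceOf {V : Type*} [AddCommGroup V] [Module ℝ V] (F C : Set V) : Prop :=
  F.Nonempty ∧ Convex ℝ F ∧ F ⊆ C ∧
    ∀ x ∈ C, ∀ y ∈ C, ∀ t : ℝ, 0 < t → t < 1 →
      t • x + (1 - t) • y ∈ F → x ∈ F ∧ y ∈ F

/-- A facet of a cone: a face of dimension one less than the dimension of the cone. -/
def IsFacetOf {V : Type*} [AddCommGroup V] [Module ℝ V] (F C : Set V) : Prop :=
  IsFaceOf F C ∧
    Module.finrank ℝ (Submodule.span ℝ F) + 1 = Module.finrank ℝ (Submodule.span ℝ C)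

/-- Any facet `F` of a proper polyhedral cone `C` is a retract of it: there is a
positive linear map `Φ : V → span F` mapping `C` into `F`, which restricts to the
identity on `span F` (i.e. `Φ` composed with the inclusion of `span F` is the identity). -/
theorem stmt9 {V : Type*} [AddCommGroup V] [Module ℝ V] [FiniteDimensional ℝ V]
    (C F : Set V) (hC : IsProperCone C) (hpoly : IsPolyhedralCone C)
    (hF : IsFacetOf F C) :
    ∃ Φ : V →ₗ[ℝ] (Submodule.span ℝ F),
      (∀ x ∈ C, (Φ x : V) ∈ F) ∧ Φ ∘ₗ (Submodule.span ℝ F).subtype = LinearMap.id := by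
  classical
  obtain ⟨hconv, _hcl, hcone, hsal, hspanC⟩ := hC
  obtain ⟨⟨hFne, hFconv, hFC, hface⟩, hdim⟩ := hF
  set W := Submodule.span ℝ F with hWdef
  -- 0 ∈ C
  have h0C : (0 : V) ∈ C := by
    have h0 : (0 : V) ∈ C ∩ (-C) := by rw [hsal]; rfl
    exact h0.1
  -- 0 ∈ F
  obtain ⟨x₀, hx₀⟩ := hFne
  have h0F : (0 : V) ∈ F := by
    have h2 : (2 : ℝ) • x₀ ∈ C := hcone x₀ (hFC hx₀) 2 (by norm_num)
    refine (hface _ h2 0 h0C (1/2) (by norm_num) (by norm_num) ?_).2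
    have : (1/2 : ℝ) • (2 : ℝ) • x₀ + (1 - 1/2 : ℝ) • (0 : V) = x₀ := by module
    rw [this]; exact hx₀
  -- F is closed under nonnegative scaling
  have hFsmul : ∀ x ∈ F, ∀ a : ℝ, 0 ≤ a → a • x ∈ F := by
    intro x hx a ha
    rcases le_or_gt a 1 with h1 | h1
    · have h : a • x + (1 - a) • (0:V) ∈ F := hFconv hx h0F ha (by linarith) (by ring)
      simpa using h
    · have hax : a • x ∈ C := hcone x (hFC hx) a ha
      refine (hface _ hax 0 h0C (1/a) (by positivity) (by rw [div_lt_one] <;> linarith) ?_).1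
      have : (1/a : ℝ) • a • x + (1 - 1/a : ℝ) • (0 : V) = x := by
        rw [smul_zero, add_zero, smul_smul, one_div, inv_mul_cancel₀ (by linarith), one_smul]
      rw [this]; exact hx
  -- F is closed under addition
  have hFadd : ∀ x ∈ F, ∀ y ∈ F, x + y ∈ F := by
    intro x hx y hy
    have h : (1/2 : ℝ) • x + (1/2 : ℝ) • y ∈ F :=
      hFconv hx hy (by norm_num) (by norm_num) (by norm_num)
    have h2 := hFsmul _ h 2 (by norm_num)
    have : (2 : ℝ) • ((1/2 : ℝ) • x + (1/2 : ℝ) • y) = x + y := by module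
    rwa [this] at h2
  -- finite sums
  have hFsum : ∀ {ι : Type} (s : Finset ι) (g : ι → V), (∀ i ∈ s, g i ∈ F) →
      ∑ i ∈ s, g i ∈ F := by
    intro ι s g hg
    exact Finset.sum_induction g (· ∈ F) (fun a b ha hb => hFadd a ha b hb) h0F hg
  -- every element of W is a difference of elements of F
  have hdiff : ∀ w ∈ W, ∃ a ∈ F, ∃ b ∈ F, w = a - b := by
    intro w hw
    induction hw using Submodule.span_induction with
    | mem x hx => exact ⟨x, hx, 0, h0F, (sub_zero x).symm⟩
    | zero => exact ⟨0, h0F, 0, h0F, by simp⟩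
    | add x y hx hy ihx ihy =>
      obtain ⟨a, ha, b, hb, rfl⟩ := ihx
      obtain ⟨c, hc, d, hd, rfl⟩ := ihy
      exact ⟨a + c, hFadd a ha c hc, b + d, hFadd b hb d hd, by abel⟩
    | smul c x hx ih =>
      obtain ⟨a, ha, b, hb, rfl⟩ := ih
      rcases le_or_gt 0 c with hc | hc
      · exact ⟨c • a, hFsmul a ha c hc, c • b, hFsmul b hb c hc, by rw [smul_sub]⟩
      · refine ⟨(-c) • b, hFsmul b hb _ (by linarith), (-c) • a, hFsmul a ha _ (by linarith), ?_⟩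
        rw [smul_sub, neg_smul, neg_smul]; abel
  -- C ∩ W ⊆ F
  have hCW : ∀ x ∈ C, x ∈ W → x ∈ F := by
    intro x hxC hxW
    obtain ⟨a, ha, b, hb, hab⟩ := hdiff x hxW
    refine (hface x hxC b (hFC hb) (1/2) (by norm_num) (by norm_num) ?_).1
    have : (1/2 : ℝ) • x + (1 - 1/2 : ℝ) • b = (1/2 : ℝ) • a := by
      rw [show x = a - b from hab]; module
    rw [this]; exact hFsmul a ha _ (by norm_num)
  -- dimension facts
  have hVfin : Module.finrank ℝ V = Module.finrank ℝ W + 1 := by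
    rw [hspanC, finrank_top] at hdim
    omega
  -- a functional with kernel W which is nonnegative on C
  obtain ⟨f, hker, hfpos⟩ : ∃ f : V →ₗ[ℝ] ℝ, LinearMap.ker f = W ∧ ∀ x ∈ C, 0 ≤ f x := by
    -- first: some functional with kernel W
    have hQ : Module.finrank ℝ (V ⧸ W) = 1 := by
      have h := Submodule.finrank_quotient_add_finrank W
      omega
    obtain ⟨b⟩ : Nonempty (Module.Basis (Fin 1) ℝ (V ⧸ W)) := ⟨Module.finBasisOfFinrankEq ℝ _ hQ⟩
    set f : V →ₗ[ℝ] ℝ := (b.coord 0) ∘ₗ W.mkQ with hf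
    obtain ⟨y, hy⟩ := Submodule.mkQ_surjective W (b 0)
    have hfy : f y = 1 := by simp [hf, hy]
    have hWle : W ≤ LinearMap.ker f := by
      intro x hx
      simp [hf, LinearMap.mem_ker, (Submodule.Quotient.mk_eq_zero W).mpr hx]
    have hkerf : LinearMap.ker f = W := by
      refine (Submodule.eq_of_le_of_finrank_le hWle ?_).symm
      have hsurj : Function.Surjective f := by
        intro r
        exact ⟨r • y, by rw [map_smul, hfy, smul_eq_mul, mul_one]⟩
      have hrange : LinearMap.range f = ⊤ := LinearMap.range_eq_top.mpr hsurj
      have h1 := LinearMap.finrank_range_add_finrank_ker f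
      rw [hrange, finrank_top, Module.finrank_self] at h1
      omega
    -- sign
    have hsign : (∀ x ∈ C, 0 ≤ f x) ∨ (∀ x ∈ C, f x ≤ 0) := by
      by_contra hc
      push_neg at hc
      obtain ⟨⟨x, hxC, hx⟩, ⟨y', hyC, hy'⟩⟩ := hc
      have hy0 : 0 < f y' := hy'
      set t : ℝ := f y' / (f y' - f x) with ht
      have hden : (0:ℝ) < f y' - f x := by linarith
      have ht0 : 0 < t := div_pos hy0 hden
      have ht1 : t < 1 := by rw [ht, div_lt_one hden]; linarith
      have hz : t • x + (1 - t) • y' ∈ C := hconv hxC hyC ht0.le (by linarith) (by ring)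
      have hfz : f (t • x + (1 - t) • y') = 0 := by
        rw [map_add, map_smul, map_smul, smul_eq_mul, smul_eq_mul, ht]
        field_simp
        ring
      have hzF : t • x + (1 - t) • y' ∈ F := by
        refine hCW _ hz ?_
        rw [← hkerf]; exact hfz
      have hxF := (hface x hxC y' hyC t ht0 ht1 hzF).1
      have : f x = 0 := by
        have hxW : x ∈ LinearMap.ker f := hkerf ▸ Submodule.subset_span hxF
        exact hxW
      linarith
    rcases hsign with h | h
    · exact ⟨f, hkerf, h⟩
    · refine ⟨-f, ?_, fun x hx => by simpa using h x hx⟩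
      rw [← hkerf]
      ext x
      simp [LinearMap.mem_ker, neg_eq_zero]
  have hFW : F ⊆ (W : Set V) := Submodule.subset_span
  have hfF : ∀ x ∈ F, f x = 0 := fun x hx => by
    have : x ∈ LinearMap.ker f := hker ▸ hFW hx
    exact this
  -- generators
  obtain ⟨k, vg, hCgen⟩ := hpoly
  have hvgC : ∀ i, vg i ∈ C := by
    intro i
    rw [hCgen]
    refine ⟨fun j => if j = i then 1 else 0, fun j => by positivity, ?_⟩
    simp [ite_smul]
  -- some generator has positive value
  obtain ⟨i₀, hi₀⟩ : ∃ i₀, 0 < f (vg i₀) := by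
    by_contra hP
    push_neg at hP
    have hall : ∀ i, f (vg i) = 0 := fun i => le_antisymm (hP i) (hfpos _ (hvgC i))
    have hCk : ∀ x ∈ C, f x = 0 := by
      intro x hx
      rw [hCgen] at hx
      obtain ⟨c, _, rfl⟩ := hx
      simp [map_sum, map_smul, hall]
    have hle : Submodule.span ℝ C ≤ LinearMap.ker f :=
      Submodule.span_le.mpr fun x hx => hCk x hx
    rw [hspanC, top_le_iff, hker] at hle
    rw [hle, finrank_top] at hVfin
    omega
  -- Lemma A': translating into F
  have lemA : ∀ w ∈ W, ∃ p ∈ F, p + w ∈ F := by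
    intro w hw
    induction hw using Submodule.span_induction with
    | mem x hx => exact ⟨0, h0F, by simpa using hx⟩
    | zero => exact ⟨0, h0F, by simpa using h0F⟩
    | add x y hx hy ihx ihy =>
      obtain ⟨p, hp, hp2⟩ := ihx
      obtain ⟨q, hq, hq2⟩ := ihy
      refine ⟨p + q, hFadd p hp q hq, ?_⟩
      have : p + q + (x + y) = (p + x) + (q + y) := by abel
      rw [this]; exact hFadd _ hp2 _ hq2
    | smul c x hx ih =>
      obtain ⟨p, hp, hp2⟩ := ih
      rcases le_or_gt 0 c with hc | hc
      · refine ⟨c • p, hFsmul p hp c hc, ?_⟩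
        have : c • p + c • x = c • (p + x) := by rw [smul_add]
        rw [this]; exact hFsmul _ hp2 c hc
      · refine ⟨(-c) • (p + x), hFsmul _ hp2 _ (by linarith), ?_⟩
        have : (-c) • (p + x) + c • x = (-c) • p := by module
        rw [this]; exact hFsmul p hp _ (by linarith)
  -- choose translators for each generator
  have key : ∀ i : Fin k, ∃ p, p ∈ F ∧ (0 < f (vg i) →
      p + ((f (vg i))⁻¹ • vg i - (f (vg i₀))⁻¹ • vg i₀) ∈ F) := by
    intro i
    by_cases hi : 0 < f (vg i)
    · have hwW : (f (vg i))⁻¹ • vg i - (f (vg i₀))⁻¹ • vg i₀ ∈ W := by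
        rw [← hker, LinearMap.mem_ker, map_sub, map_smul, map_smul, smul_eq_mul, smul_eq_mul,
          inv_mul_cancel₀ hi.ne', inv_mul_cancel₀ hi₀.ne', sub_self]
      obtain ⟨p, hp, hp2⟩ := lemA _ hwW
      exact ⟨p, hp, fun _ => hp2⟩
    · exact ⟨0, h0F, fun h => absurd h hi⟩
  choose p hpF hpc using key
  set z : V := ∑ i, p i with hz
  have hzF : z ∈ F := hFsum _ _ fun i _ => hpF i
  set v : V := (f (vg i₀))⁻¹ • vg i₀ - z with hv
  have hfv : f v = 1 := by
    rw [hv, map_sub, map_smul, smul_eq_mul, inv_mul_cancel₀ hi₀.ne', hfF z hzF, sub_zero]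
  -- each generator lands in F
  have hgen : ∀ i, vg i - f (vg i) • v ∈ F := by
    intro i
    by_cases hi : 0 < f (vg i)
    · have hsplit : vg i - f (vg i) • v
          = f (vg i) • ((p i + ((f (vg i))⁻¹ • vg i - (f (vg i₀))⁻¹ • vg i₀))
            + ∑ j ∈ Finset.univ.erase i, p j) := by
        rw [hv, hz, ← Finset.add_sum_erase _ p (Finset.mem_univ i)]
        rw [smul_add, smul_add, smul_sub, smul_sub, smul_smul, smul_smul,
          mul_inv_cancel₀ hi.ne', one_smul]
        module
      rw [hsplit]
      refine hFsmul _ ?_ _ hi.le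
      exact hFadd _ (hpc i hi) _ (hFsum _ _ fun j _ => hpF j)
    · have hfi : f (vg i) = 0 := le_antisymm (not_lt.mp hi) (hfpos _ (hvgC i))
      rw [hfi, zero_smul, sub_zero]
      exact hCW _ (hvgC i) (by rw [← hker]; exact hfi)
  -- the projection
  set L : V →ₗ[ℝ] V := LinearMap.id - f.smulRight v with hL
  have hLapp : ∀ x, L x = x - f x • v := fun x => rfl
  have hLW : ∀ x, L x ∈ W := by
    intro x
    rw [← hker, LinearMap.mem_ker, hLapp, map_sub, map_smul, smul_eq_mul, hfv, mul_one, sub_self]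
  refine ⟨L.codRestrict W hLW, ?_, ?_⟩
  · intro x hx
    rw [LinearMap.codRestrict_apply]
    rw [hCgen] at hx
    obtain ⟨c, hc, rfl⟩ := hx
    have : L (∑ i, c i • vg i) = ∑ i, c i • (vg i - f (vg i) • v) := by
      rw [map_sum]
      exact Finset.sum_congr rfl fun i _ => by rw [map_smul, hLapp]
    rw [this]
    exact hFsum _ _ fun i _ => hFsmul _ (hgen i) _ (hc i)
  · apply LinearMap.ext
    rintro ⟨y, hy⟩
    apply Subtype.ext
    have hfy : f y = 0 := by
      have : y ∈ LinearMap.ker f := hker ▸ hy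
      exact this
    simp only [LinearMap.coe_comp, Function.comp_apply, Submodule.coe_subtype,
      LinearMap.codRestrict_apply, LinearMap.id_coe, id_eq]
    rw [hLapp, hfy, zero_smul, sub_zero]
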